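/- arXiv:2502.00073 — 2 statements merged into one kernel-verified Lean document; each statement's English description precedes it below -/
import Mathlib

section
/- With the notation above (Pᵢ stable plateaux, Γᵢ their initial depths, Vᵢ = {η : Φ(Pᵢ, η) − H(Pᵢ) < Γᵢ}), the bottom of Vᵢ equals Pᵢ: argmin_{Vᵢ} H = Pᵢ. -/
open SimpleGraph

variable {Ω : Type*}

/-- The height of a walk: the maximum of the energy `H` along its support. -/
noncomputable def walkHeight (H : Ω → ℝ) {G : SimpleGraph Ω} {a b : Ω} (w : G.Walk a b) : ℝ :=
  (w.support.map H).foldr max (H b)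

/-- The communication height between two vertices: minimal height over all paths. -/
noncomputable def commHeight (G : SimpleGraph Ω) (H : Ω → ℝ) (a b : Ω) : ℝ :=
  sInf {h : ℝ | ∃ w : G.Walk a b, walkHeight H w = h}

/-- Outer boundary of a set of vertices. -/
def outerBoundary (G : SimpleGraph Ω) (A : Set Ω) : Set Ω :=
  {ξ | ξ ∉ A ∧ ∃ η ∈ A, G.Adj ξ η}

/-- A (nontrivial) cycle: nonempty, connected, proper, with `max_C H < min_{∂C} H`. -/
def IsCycleSet (G : SimpleGraph Ω) (H : Ω → ℝ) (C : Set Ω) : Prop :=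
  C.Nonempty ∧ (G.induce C).Connected ∧ C ≠ Set.univ ∧
    ∀ η ∈ C, ∀ ξ ∈ outerBoundary G C, H η < H ξ

/-- A stable plateau: nonempty, connected, constant energy, strictly higher on the boundary. -/
def IsStablePlateau (G : SimpleGraph Ω) (H : Ω → ℝ) (P : Set Ω) : Prop :=
  P.Nonempty ∧ (G.induce P).Connected ∧ (∀ x ∈ P, ∀ y ∈ P, H x = H y) ∧
    ∀ x ∈ P, ∀ ζ ∈ outerBoundary G P, H x < H ζ

/-- Communication height between two sets. -/
noncomputable def commHeightSet (G : SimpleGraph Ω) (H : Ω → ℝ) (A B : Set Ω) : ℝ :=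
  sInf {h : ℝ | ∃ a ∈ A, ∃ b ∈ B, commHeight G H a b = h}

/-- The bottom of a set: the minimizers of `H` on it. -/
def bottom (H : Ω → ℝ) (C : Set Ω) : Set Ω := {x ∈ C | ∀ y ∈ C, H x ≤ H y}

/-- `A` is a connected component of `S`: a maximal nonempty connected subset of `S`. -/
def IsConnectedComponentOf (G : SimpleGraph Ω) (S A : Set Ω) : Prop :=
  A ⊆ S ∧ A.Nonempty ∧ (G.induce A).Connected ∧
    ∀ B : Set Ω, A ⊆ B → B ⊆ S → (G.induce B).Connected → B = A

/-! ### Auxiliary lemmas -/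

set_option linter.unusedSectionVars false

lemma foldr_max_le_iff' {l : List ℝ} {init h : ℝ} :
    l.foldr max init ≤ h ↔ init ≤ h ∧ ∀ x ∈ l, x ≤ h := by
  induction l with
  | nil => simp
  | cons a t ih => simp [ih, max_le_iff]; tauto

lemma le_foldr_max_mem' {l : List ℝ} {init x : ℝ} (hx : x ∈ l) : x ≤ l.foldr max init := by
  induction l with
  | nil => simp at hx
  | cons a t ih =>
    rcases List.mem_cons.mp hx with h | h
    · exact h ▸ le_max_left _ _
    · exact (ih h).trans (le_max_right _ _)

lemma le_walkHeight {H : Ω → ℝ} {G : SimpleGraph Ω} {a b : Ω} {w : G.Walk a b} {x : Ω}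
    (hx : x ∈ w.support) : H x ≤ walkHeight H w :=
  le_foldr_max_mem' (List.mem_map.mpr ⟨_, hx, rfl⟩)

lemma walkHeight_le_iff {H : Ω → ℝ} {G : SimpleGraph Ω} {a b : Ω} {w : G.Walk a b} {h : ℝ} :
    walkHeight H w ≤ h ↔ ∀ x ∈ w.support, H x ≤ h := by
  unfold walkHeight
  rw [foldr_max_le_iff']
  constructor
  · rintro ⟨-, hl⟩ x hx
    exact hl _ (List.mem_map.mpr ⟨_, hx, rfl⟩)
  · intro hl
    refine ⟨hl _ w.end_mem_support, ?_⟩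
    rintro x hx
    obtain ⟨y, hy, rfl⟩ := List.mem_map.mp hx
    exact hl y hy

lemma walkHeight_mem_range {H : Ω → ℝ} {G : SimpleGraph Ω} {a b : Ω} (w : G.Walk a b) :
    walkHeight H w ∈ Set.range H := by
  unfold walkHeight
  generalize w.support = l
  induction l with
  | nil => exact ⟨b, rfl⟩
  | cons c t ih =>
    rcases max_choice (H c) ((t.map H).foldr max (H b)) with h | h <;>
      simp only [List.map_cons, List.foldr_cons, h]
    · exact ⟨c, rfl⟩
    · exact ih

lemma walkHeight_nil {H : Ω → ℝ} {G : SimpleGraph Ω} {a : Ω} :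
    walkHeight H (Walk.nil : G.Walk a a) = H a := by
  simp [walkHeight]

section CommHeight

variable [Finite Ω] {G : SimpleGraph Ω} {H : Ω → ℝ}

lemma commSet_finite (a b : Ω) : {h : ℝ | ∃ w : G.Walk a b, walkHeight H w = h}.Finite :=
  (Set.finite_range H).subset (by rintro _ ⟨w, rfl⟩; exact walkHeight_mem_range w)

lemma exists_walk_commHeight (hG : G.Connected) (a b : Ω) :
    ∃ w : G.Walk a b, walkHeight H w = commHeight G H a b := by
  have hne : {h : ℝ | ∃ w : G.Walk a b, walkHeight H w = h}.Nonempty :=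
    (hG.preconnected a b).elim fun w => ⟨_, w, rfl⟩
  exact hne.csInf_mem (commSet_finite a b)

lemma commHeight_le_walkHeight {a b : Ω} (w : G.Walk a b) :
    commHeight G H a b ≤ walkHeight H w :=
  csInf_le (commSet_finite a b).bddBelow ⟨w, rfl⟩

lemma commSetSet_finite (A B : Set Ω) :
    {h : ℝ | ∃ a ∈ A, ∃ b ∈ B, commHeight G H a b = h}.Finite := by
  have : {h : ℝ | ∃ a ∈ A, ∃ b ∈ B, commHeight G H a b = h} ⊆
      (fun q : Ω × Ω => commHeight G H q.1 q.2) '' Set.univ := by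
    rintro _ ⟨a, -, b, -, rfl⟩
    exact ⟨(a, b), trivial, rfl⟩
  exact (Set.finite_univ.image _).subset this

lemma exists_commHeightSet_attained {A B : Set Ω} (hA : A.Nonempty) (hB : B.Nonempty) :
    ∃ a ∈ A, ∃ b ∈ B, commHeight G H a b = commHeightSet G H A B := by
  obtain ⟨a, ha⟩ := hA; obtain ⟨b, hb⟩ := hB
  have := Set.Nonempty.csInf_mem (s := {h : ℝ | ∃ a ∈ A, ∃ b ∈ B, commHeight G H a b = h})
    ⟨_, a, ha, b, hb, rfl⟩ (commSetSet_finite A B)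
  exact this

lemma commHeightSet_le {A B : Set Ω} {a b : Ω} (ha : a ∈ A) (hb : b ∈ B) :
    commHeightSet G H A B ≤ commHeight G H a b :=
  csInf_le (commSetSet_finite A B).bddBelow ⟨a, ha, b, hb, rfl⟩

lemma le_commHeight' (hG : G.Connected) (a b : Ω) :
    H b ≤ commHeight G H a b := by
  obtain ⟨w, hw⟩ := exists_walk_commHeight (H := H) hG a b
  exact hw ▸ le_walkHeight w.end_mem_support

lemma commHeight_self_le (a : Ω) : commHeight G H a a ≤ H a := by
  have := commHeight_le_walkHeight (H := H) (Walk.nil : G.Walk a a)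
  rwa [walkHeight_nil] at this

lemma commHeight_triangle (hG : G.Connected) (a b c : Ω) :
    commHeight G H a c ≤ max (commHeight G H a b) (commHeight G H b c) := by
  obtain ⟨w1, hw1⟩ := exists_walk_commHeight (H := H) hG a b
  obtain ⟨w2, hw2⟩ := exists_walk_commHeight (H := H) hG b c
  refine (commHeight_le_walkHeight (w1.append w2)).trans ?_
  rw [walkHeight_le_iff]
  intro x hx
  rcases (Walk.mem_support_append_iff _ _).mp hx with h | h
  · exact le_max_of_le_left (hw1 ▸ le_walkHeight h)
  · exact le_max_of_le_right (hw2 ▸ le_walkHeight h)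

lemma commHeight_concat (hG : G.Connected) {b c : Ω} (a : Ω) (hbc : G.Adj b c) :
    commHeight G H a c ≤ max (commHeight G H a b) (H c) := by
  obtain ⟨w1, hw1⟩ := exists_walk_commHeight (H := H) hG a b
  refine (commHeight_le_walkHeight (w1.concat hbc)).trans ?_
  rw [walkHeight_le_iff]
  intro x hx
  rw [Walk.support_concat, List.mem_append] at hx
  rcases hx with h | h
  · exact le_max_of_le_left (hw1 ▸ le_walkHeight h)
  · simp at h
    exact h ▸ le_max_right _ _

lemma commHeightSet_singleton_triangle (hG : G.Connected) {A : Set Ω} (hA : A.Nonempty)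
    (b c : Ω) :
    commHeightSet G H A {c} ≤ max (commHeightSet G H A {b}) (commHeight G H b c) := by
  obtain ⟨a, ha, b', hb', hab⟩ := exists_commHeightSet_attained (G := G) (H := H) hA
    (Set.singleton_nonempty b)
  rcases hb' with rfl
  refine (commHeightSet_le ha (Set.mem_singleton c)).trans ?_
  refine (commHeight_triangle hG a b' c).trans ?_
  rw [hab]

lemma le_commHeightSet_singleton (hG : G.Connected) {A : Set Ω} (hA : A.Nonempty) (b : Ω) :
    H b ≤ commHeightSet G H A {b} := by
  obtain ⟨a, ha, b', hb', hab⟩ := exists_commHeightSet_attained (G := G) (H := H) hA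
    (Set.singleton_nonempty b)
  rcases hb' with rfl
  exact hab ▸ le_commHeight' hG a b'

end CommHeight

section Structural

variable {G : SimpleGraph Ω}

lemma walk_of_induce_walk {S : Set Ω} :
    ∀ {u v : S} (_ : (G.induce S).Walk u v),
      ∃ w : G.Walk u.1 v.1, ∀ x ∈ w.support, x ∈ S := by
  intro u v p
  induction p with
  | @nil u => exact ⟨Walk.nil, by intro x hx; simp at hx; exact hx ▸ u.2⟩
  | @cons a c v hadj q ih =>
    obtain ⟨w, hw⟩ := ih
    have hac : G.Adj a.1 c.1 := hadj
    refine ⟨Walk.cons hac w, ?_⟩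
    intro x hx
    rw [Walk.support_cons, List.mem_cons] at hx
    rcases hx with rfl | hx
    · exact a.2
    · exact hw x hx

lemma exists_walk_in_set {S : Set Ω} (h : (G.induce S).Connected) {a b : Ω}
    (ha : a ∈ S) (hb : b ∈ S) : ∃ w : G.Walk a b, ∀ x ∈ w.support, x ∈ S := by
  obtain ⟨p⟩ := h.preconnected ⟨a, ha⟩ ⟨b, hb⟩
  exact walk_of_induce_walk p

lemma reachable_induce_of_walk {S : Set Ω} :
    ∀ {a b : Ω} (w : G.Walk a b) (_ : ∀ x ∈ w.support, x ∈ S) (ha : a ∈ S) (hb : b ∈ S),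
      (G.induce S).Reachable ⟨a, ha⟩ ⟨b, hb⟩ := by
  intro a b w
  induction w with
  | nil => intro _ ha hb; rfl
  | @cons a c b hadj q ih =>
    intro hsup ha hb
    have hc : c ∈ S := hsup c (by
      rw [Walk.support_cons]
      exact List.mem_cons_of_mem _ q.start_mem_support)
    have h1 : (G.induce S).Adj ⟨a, ha⟩ ⟨c, hc⟩ := by
      simp [comap_adj]; exact hadj
    exact (Reachable.symm (Adj.reachable h1)).symm.trans
      (ih (fun x hx => hsup x (by rw [Walk.support_cons]; exact List.mem_cons_of_mem _ hx)) hc hb)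

lemma exists_exit {S : Set Ω} :
    ∀ {a b : Ω} (w : G.Walk a b) (_ : a ∈ S) (_ : b ∉ S),
      ∃ u ∈ S, ∃ v, v ∉ S ∧ G.Adj u v ∧ v ∈ w.support := by
  intro a b w
  induction w with
  | nil => intro ha hb; exact absurd ha hb
  | @cons a c b hadj q ih =>
    intro ha hb
    by_cases hc : c ∈ S
    · obtain ⟨u, hu, v, hv, huv, hvs⟩ := ih hc hb
      exact ⟨u, hu, v, hv, huv, by rw [Walk.support_cons]; exact List.mem_cons_of_mem _ hvs⟩
    · exact ⟨a, ha, c, hc, hadj,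
        by rw [Walk.support_cons]; exact List.mem_cons_of_mem _ q.start_mem_support⟩

lemma plateaux_disjoint {H : Ω → ℝ} {P Q : Set Ω}
    (hP : IsStablePlateau G H P) (hQ : IsStablePlateau G H Q) (hne : P ≠ Q) :
    ∀ x, x ∈ P → x ∉ Q := by
  have key : ∀ (P Q : Set Ω), IsStablePlateau G H P → IsStablePlateau G H Q →
      ∀ x ∈ P, x ∈ Q → ∀ y ∈ Q, y ∉ P → False := by
    intro P Q hP hQ x hxP hxQ y hyQ hyP
    obtain ⟨w, hw⟩ := exists_walk_in_set hQ.2.1 hxQ hyQ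
    obtain ⟨u, hu, v, hv, huv, hvs⟩ := exists_exit w hxP hyP
    have hvb : v ∈ outerBoundary G P := ⟨hv, u, hu, huv.symm⟩
    have h1 : H u < H v := hP.2.2.2 u hu v hvb
    have h2 : H u = H x := hP.2.2.1 u hu x hxP
    have h3 : H v = H x := hQ.2.2.1 v (hw v hvs) x hxQ
    rw [h2, h3] at h1; exact lt_irrefl _ h1
  intro x hxP hxQ
  by_cases hQP : Q ⊆ P
  · have hPQ : ¬ P ⊆ Q := fun h => hne (le_antisymm h hQP)
    obtain ⟨y, hyP, hyQ⟩ := Set.not_subset.mp hPQ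
    exact key Q P hQ hP x hxQ hxP y hyP hyQ
  · obtain ⟨y, hyQ, hyP⟩ := Set.not_subset.mp hQP
    exact key P Q hP hQ x hxP hxQ y hyQ hyP

end Structural

/-- Core lemma: if `ξ` can be reached from `Pᵢ` strictly below the level `T = Φ(Pᵢ, ∪ⱼ Pⱼ)`
and `ξ` minimizes `H` on everything reachable from it below `T`, then `ξ ∈ Pᵢ`. -/
lemma core_mem_plateau [Fintype Ω] (G : SimpleGraph Ω) (hG : G.Connected) (H : Ω → ℝ)
    (ν : ℕ) (P : Fin ν → Set Ω)
    (hP : ∀ i, IsStablePlateau G H (P i))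
    (hPall : ∀ Q : Set Ω, IsStablePlateau G H Q → ∃ i, Q = P i)
    (i : Fin ν) (T : ℝ)
    (hT : T = commHeightSet G H (P i) {x | ∃ j, j ≠ i ∧ x ∈ P j})
    (ξ : Ω)
    (hξ : commHeightSet G H (P i) {ξ} < T)
    (hmin : ∀ ζ, commHeight G H ξ ζ < T → H ξ ≤ H ζ) :
    ξ ∈ P i := by
  have hPiNe : (P i).Nonempty := (hP i).1
  have hHξT : H ξ < T := lt_of_le_of_lt (le_commHeightSet_singleton hG hPiNe ξ) hξ
  set M : Set Ω := {ζ | commHeight G H ξ ζ < T ∧ H ζ = H ξ} with hM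
  set Q : Set Ω := {ζ | ∃ w : G.Walk ξ ζ, ∀ x ∈ w.support, x ∈ M} with hQdef
  have hξM : ξ ∈ M := ⟨lt_of_le_of_lt (commHeight_self_le ξ) hHξT, rfl⟩
  have hξQ : ξ ∈ Q := ⟨Walk.nil, by intro x hx; simp at hx; exact hx ▸ hξM⟩
  have hQM : Q ⊆ M := by rintro ζ ⟨w, hw⟩; exact hw ζ w.end_mem_support
  have hQch : ∀ x ∈ Q, commHeight G H ξ x ≤ H ξ := by
    rintro x ⟨w, hw⟩
    refine (commHeight_le_walkHeight w).trans ?_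
    rw [walkHeight_le_iff]
    intro z hz; exact le_of_eq (hw z hz).2
  have hconn : (G.induce Q).Connected := by
    rw [connected_iff]
    refine ⟨?_, ⟨⟨ξ, hξQ⟩⟩⟩
    have hreach : ∀ u : Q, (G.induce Q).Reachable ⟨ξ, hξQ⟩ u := by
      rintro ⟨u, w, hw⟩
      have hsub : ∀ x ∈ w.support, x ∈ Q := by
        intro x hx
        obtain ⟨q, r, rfl⟩ := Walk.mem_support_iff_exists_append.mp hx
        exact ⟨q, fun z hz => hw z ((Walk.mem_support_append_iff _ _).mpr (Or.inl hz))⟩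
      exact reachable_induce_of_walk w hsub hξQ ⟨w, hw⟩
    intro u v
    exact (hreach u).symm.trans (hreach v)
  have hQplat : IsStablePlateau G H Q := by
    refine ⟨⟨ξ, hξQ⟩, hconn, ?_, ?_⟩
    · intro x hx y hy; rw [(hQM hx).2, (hQM hy).2]
    · rintro x hx ζ ⟨hζQ, x', hx'Q, hadj⟩
      rw [(hQM hx).2]
      by_contra hle
      push_neg at hle
      have hchζ : commHeight G H ξ ζ < T := by
        refine lt_of_le_of_lt (commHeight_concat hG ξ hadj.symm) ?_
        exact max_lt (lt_of_le_of_lt (hQch x' hx'Q) hHξT) (lt_of_le_of_lt hle hHξT)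
      have hζeq : H ζ = H ξ := le_antisymm hle (hmin ζ hchζ)
      obtain ⟨w, hw⟩ := hx'Q
      refine hζQ ⟨w.concat hadj.symm, ?_⟩
      intro z hz
      rw [Walk.support_concat, List.mem_append] at hz
      rcases hz with h | h
      · exact hw z h
      · simp at h; exact h ▸ ⟨hchζ, hζeq⟩
  obtain ⟨j, hj⟩ := hPall Q hQplat
  by_cases hji : j = i
  · rw [← hji, ← hj]; exact hξQ
  · exfalso
    obtain ⟨a, ha, b, hb, hab⟩ := exists_commHeightSet_attained (G := G) (H := H) hPiNe
      (Set.singleton_nonempty ξ)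
    rcases hb with rfl
    have h1 : commHeightSet G H (P i) {x | ∃ j, j ≠ i ∧ x ∈ P j} ≤ commHeight G H a b :=
      commHeightSet_le ha ⟨j, hji, hj ▸ hξQ⟩
    rw [hab] at h1
    rw [hT] at hξ
    linarith

/-- the bottom of the valley `Vᵢ` is exactly the stable plateau `Pᵢ`. -/
theorem bottom_of_valley [Fintype Ω] (G : SimpleGraph Ω) (hG : G.Connected) (H : Ω → ℝ)
    (ν : ℕ) (hν : 2 ≤ ν) (P : Fin ν → Set Ω)
    (hP : ∀ i, IsStablePlateau G H (P i))
    (hPinj : Function.Injective P)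
    (hPall : ∀ Q : Set Ω, IsStablePlateau G H Q → ∃ i, Q = P i)
    (p : Fin ν → Ω) (hp : ∀ i, p i ∈ P i)
    (Γ : Fin ν → ℝ)
    (hΓ : ∀ i, Γ i = commHeightSet G H (P i) {x | ∃ j, j ≠ i ∧ x ∈ P j} - H (p i))
    (V : Fin ν → Set Ω)
    (hV : ∀ i, V i = {η | commHeightSet G H (P i) {η} - H (p i) < Γ i}) :
    ∀ i, bottom H (V i) = P i := by
  intro i
  set T := commHeightSet G H (P i) {x | ∃ j, j ≠ i ∧ x ∈ P j} with hTdef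
  have hPiNe : (P i).Nonempty := (hP i).1
  have hpi := hp i
  have hconst : ∀ x ∈ P i, H x = H (p i) := fun x hx => (hP i).2.2.1 x hx _ hpi
  have : Nontrivial (Fin ν) := Fin.nontrivial_iff_two_le.mpr hν
  obtain ⟨j, hji⟩ := exists_ne i
  have hothersNe : {x | ∃ j, j ≠ i ∧ x ∈ P j}.Nonempty := ⟨p j, j, hji, hp j⟩
  have hΓpos : H (p i) < T := by
    obtain ⟨a, ha, b, hb, hab⟩ := exists_commHeightSet_attained (G := G) (H := H) hPiNe hothersNe
    obtain ⟨k, hki, hbk⟩ := hb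
    have hbP : b ∉ P i :=
      plateaux_disjoint (hP k) (hP i) (fun h => hki (hPinj h)) b hbk
    obtain ⟨w, hw⟩ := exists_walk_commHeight (H := H) hG a b
    obtain ⟨u, hu, v, hv, huv, hvs⟩ := exists_exit w ha hbP
    have h1 : H u < H v := (hP i).2.2.2 u hu v ⟨hv, u, hu, huv.symm⟩
    have h2 : H v ≤ walkHeight H w := le_walkHeight hvs
    rw [hw, hab] at h2
    calc H (p i) = H u := (hconst u hu).symm
      _ < H v := h1
      _ ≤ T := h2
  have hPhi_le : ∀ x ∈ P i, commHeightSet G H (P i) {x} ≤ H (p i) := by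
    intro x hx
    obtain ⟨w, hw⟩ := exists_walk_in_set (hP i).2.1 hpi hx
    refine (commHeightSet_le hpi (Set.mem_singleton x)).trans ((commHeight_le_walkHeight w).trans ?_)
    rw [walkHeight_le_iff]
    intro z hz
    exact le_of_eq (hconst z (hw z hz))
  have hVmem : ∀ η, η ∈ V i ↔ commHeightSet G H (P i) {η} < T := by
    intro η
    rw [hV i]
    simp only [Set.mem_setOf_eq]
    rw [hΓ i, ← hTdef]
    constructor <;> intro h <;> linarith
  have hPV : P i ⊆ V i := fun x hx => (hVmem x).mpr (lt_of_le_of_lt (hPhi_le x hx) hΓpos)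
  have hA : ∀ η ∈ V i, H (p i) ≤ H η := by
    intro η hη
    have hηT := (hVmem η).mp hη
    have hηU : commHeight G H η η < T :=
      lt_of_le_of_lt (commHeight_self_le η)
        (lt_of_le_of_lt (le_commHeightSet_singleton hG hPiNe η) hηT)
    obtain ⟨ξ, hξU, hξmin⟩ := Set.exists_min_image {ζ | commHeight G H η ζ < T} H
      (Set.toFinite _) ⟨η, hηU⟩
    have hξV : commHeightSet G H (P i) {ξ} < T :=
      lt_of_le_of_lt (commHeightSet_singleton_triangle hG hPiNe η ξ) (max_lt hηT hξU)
    have hξP : ξ ∈ P i := by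
      refine core_mem_plateau G hG H ν P hP hPall i T hTdef ξ hξV ?_
      intro ζ hζ
      refine hξmin ζ ?_
      exact lt_of_le_of_lt (commHeight_triangle hG η ξ ζ) (max_lt hξU hζ)
    calc H (p i) = H ξ := (hconst ξ hξP).symm
      _ ≤ H η := hξmin η hηU
  ext x
  constructor
  · rintro ⟨hxV, hxmin⟩
    refine core_mem_plateau G hG H ν P hP hPall i T hTdef x ((hVmem x).mp hxV) ?_
    intro ζ hζ
    refine hxmin ζ ((hVmem ζ).mpr ?_)
    exact lt_of_le_of_lt (commHeightSet_singleton_triangle hG hPiNe x ζ)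
      (max_lt ((hVmem x).mp hxV) hζ)
  · intro hx
    exact ⟨hPV hx, fun y hy => (hconst x hx) ▸ hA y hy⟩
end

section
/- If C is a cycle and η, ξ ∈ C, then Φ(η, ξ) ≤ max_C H < min_{∂C} H; i.e., any two states in a cycle communicate by a path staying inside the cycle, of height at most max_C H. -/
open SimpleGraph

variable {Ω : Type*}

private lemma le_foldr_max (l : List ℝ) (b : ℝ) : b ≤ l.foldr max b := by
  induction l with
  | nil => exact le_rfl
  | cons a l ih => exact ih.trans (le_max_right a _)

private lemma foldr_max_le {l : List ℝ} {b M : ℝ} (hl : ∀ x ∈ l, x ≤ M) (hb : b ≤ M) :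
    l.foldr max b ≤ M := by
  induction l with
  | nil => exact hb
  | cons a l ih =>
    exact max_le (hl a List.mem_cons_self) (ih fun x hx => hl x (List.mem_cons_of_mem a hx))

private lemma exists_boundary {G : SimpleGraph Ω} {C : Set Ω} :
    ∀ {a b : Ω}, G.Walk a b → a ∈ C → b ∉ C → (outerBoundary G C).Nonempty := by
  intro a b w
  induction w with
  | nil => intro ha hb; exact absurd ha hb
  | @cons u v w h p ih =>
    intro ha hb
    by_cases hv : v ∈ C
    · exact ih hv hb
    · exact ⟨v, hv, u, ha, h.symm⟩

/-- two states in a cycle communicate below the boundary level. -/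
theorem commHeight_within_cycle [Fintype Ω] (G : SimpleGraph Ω) (hG : G.Connected)
    (H : Ω → ℝ) (C : Set Ω) (hC : IsCycleSet G H C)
    (η : Ω) (hη : η ∈ C) (ξ : Ω) (hξ : ξ ∈ C) :
    commHeight G H η ξ ≤ sSup (H '' C) ∧ sSup (H '' C) < sInf (H '' outerBoundary G C) := by
  obtain ⟨hne, hconn, hproper, hlt⟩ := hC
  have hCfin : (H '' C).Finite := (Set.toFinite C).image H
  have hCne : (H '' C).Nonempty := hne.image H
  obtain ⟨v, hv⟩ : ∃ v, v ∉ C := by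
    by_contra h; push_neg at h; exact hproper (Set.eq_univ_of_forall h)
  obtain ⟨w0⟩ := hG.preconnected η v
  obtain ⟨ζ, hζ⟩ := exists_boundary w0 hη hv
  have hBfin : (H '' outerBoundary G C).Finite := (Set.toFinite _).image H
  have hBne : (H '' outerBoundary G C).Nonempty := ⟨H ζ, ζ, hζ, rfl⟩
  constructor
  · obtain ⟨p⟩ := hconn ⟨η, hη⟩ ⟨ξ, hξ⟩
    let f : G.induce C →g G := ⟨Subtype.val, fun {a b} h => h⟩
    have hsupp : ∀ x ∈ (p.map f).support, x ∈ C := by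
      intro x hx
      rw [Walk.support_map] at hx
      obtain ⟨y, hy, rfl⟩ := List.mem_map.mp hx
      exact y.2
    have hwh : walkHeight H (p.map f) ≤ sSup (H '' C) := by
      apply foldr_max_le
      · intro x hx
        obtain ⟨y, hy, rfl⟩ := List.mem_map.mp hx
        exact le_csSup hCfin.bddAbove ⟨y, hsupp y hy, rfl⟩
      · exact le_csSup hCfin.bddAbove ⟨ξ, hξ, rfl⟩
    refine le_trans (csInf_le ?_ ⟨p.map f, rfl⟩) hwh
    refine ⟨H ξ, ?_⟩
    rintro h ⟨w, rfl⟩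
    exact le_foldr_max _ _
  · obtain ⟨x, hx, hxeq⟩ := hCne.csSup_mem hCfin
    obtain ⟨y, hy, hyeq⟩ := hBne.csInf_mem hBfin
    rw [← hxeq, ← hyeq]
    exact hlt x hx y hy
end
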